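/- Let R₀ be a subgroup of ℝ (as an additive ordered group) with R₀ - ℝ₊ = ℝ₊ - R₀ = ℝ, and let h : R₀ → ℝ be an additive positive map (h(x) ≥ 0 whenever x ≥ 0, x ∈ R₀). Then h extends to an additive positive map h̄ : ℝ → ℝ. -/

import Mathlib

theorem stmt14 (R₀ : AddSubgroup ℝ)
    (h1 : ∀ r : ℝ, ∃ a ∈ R₀, ∃ p : ℝ, 0 ≤ p ∧ r = a - p)
    (h2 : ∀ r : ℝ, ∃ a ∈ R₀, ∃ p : ℝ, 0 ≤ p ∧ r = p - a)
    (h : R₀ →+ ℝ) (hpos : ∀ x : R₀, 0 ≤ (x : ℝ) → 0 ≤ h x) :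
    ∃ hbar : ℝ →+ ℝ, (∀ x : ℝ, 0 ≤ x → 0 ≤ hbar x) ∧
      ∀ x : R₀, hbar (x : ℝ) = h x := by
  obtain ⟨a, haR, p, hp, h1a⟩ := h1 1
  have ha : (0:ℝ) < a := by linarith
  set a' : R₀ := ⟨a, haR⟩ with ha'def
  have ha'pos : 0 ≤ h a' := hpos a' ha.le
  have L1 : ∀ (x : R₀) (q : ℚ), (q : ℝ) * a ≤ (x:ℝ) → (q:ℝ) * h a' ≤ h x := by
    intro x q hq
    have hden : (0:ℝ) < (q.den:ℝ) := by positivity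
    have hnum : (q.num : ℝ) = (q:ℝ) * q.den := by
      rw [Rat.cast_def]; field_simp
    set z : R₀ := (q.den : ℤ) • x - (q.num) • a' with hz
    have hzval : (z : ℝ) = (q.den : ℝ) * x - (q.num : ℝ) * a := by
      simp [hz, zsmul_eq_mul, ha'def]
    have hz0 : 0 ≤ (z : ℝ) := by
      rw [hzval, hnum]
      nlinarith
    have := hpos z hz0
    rw [hz, map_sub, map_zsmul, map_zsmul, zsmul_eq_mul, zsmul_eq_mul] at this
    rw [hnum] at this
    push_cast at this
    nlinarith [hden, mul_pos hden hden]
  have L2 : ∀ (x : R₀) (q : ℚ), (x:ℝ) ≤ (q:ℝ) * a → h x ≤ (q:ℝ) * h a' := by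
    intro x q hq
    have := L1 (-x) (-q) (by push_cast; linarith)
    rw [map_neg] at this
    push_cast at this
    linarith
  have upper : ∀ x : R₀, h x * a ≤ h a' * x := by
    intro x
    by_contra hcon
    push_neg at hcon
    rcases eq_or_lt_of_le ha'pos with h0 | h0
    · obtain ⟨q, hq⟩ := exists_rat_gt ((x:ℝ)/a)
      rw [div_lt_iff₀ ha] at hq
      have := L2 x q (by linarith)
      nlinarith
    · have hlt : ((x:ℝ))/a < h x / h a' := by
        rw [div_lt_div_iff₀ ha h0]; nlinarith
      obtain ⟨q, hq1, hq2⟩ := exists_rat_btwn hlt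
      rw [div_lt_iff₀ ha] at hq1
      have := L2 x q (by linarith)
      rw [lt_div_iff₀ h0] at hq2
      linarith
  have lower : ∀ x : R₀, h a' * x ≤ h x * a := by
    intro x
    by_contra hcon
    push_neg at hcon
    rcases eq_or_lt_of_le ha'pos with h0 | h0
    · obtain ⟨q, hq⟩ := exists_rat_lt ((x:ℝ)/a)
      rw [lt_div_iff₀ ha] at hq
      have := L1 x q (by linarith)
      nlinarith
    · have hlt : h x / h a' < ((x:ℝ))/a := by
        rw [div_lt_div_iff₀ h0 ha]; nlinarith
      obtain ⟨q, hq1, hq2⟩ := exists_rat_btwn hlt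
      rw [lt_div_iff₀ ha] at hq2
      have := L1 x q (by linarith)
      rw [div_lt_iff₀ h0] at hq1
      linarith
  have key : ∀ x : R₀, h x = (h a' / a) * x := by
    intro x
    have := le_antisymm (upper x) (lower x)
    field_simp
    linarith [this]
  refine ⟨AddMonoidHom.mulLeft (h a' / a), ?_, ?_⟩
  · intro x hx
    simp only [AddMonoidHom.coe_mulLeft]
    exact mul_nonneg (div_nonneg ha'pos ha.le) hx
  · intro x
    simp only [AddMonoidHom.coe_mulLeft]
    exact (key x).symm
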